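/- Let (X, μ) be a measure space, ν > 0, and let r, u_min, u_max : X → ℝ be measurable functions in L²(μ) with u_min ≤ u_max almost everywhere. Define u*(x) := max(u_min(x), min(u_max(x), −r(x)/ν)). Then u* is measurable, belongs to L²(μ), satisfies u_min ≤ u* ≤ u_max almost everywhere, and for every u ∈ L²(μ) with u_min ≤ u ≤ u_max almost everywhere, ∫_X (r + ν u*)(u − u*) dμ ≥ 0. -/

import Mathlib

open MeasureTheory

/-- Projection formula and variational inequality for the optimal control:
`u* := max(u_min, min(u_max, −r/ν))` is measurable, in `L²`, admissible, and satisfies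
`∫ (r + ν u*)(u − u*) dμ ≥ 0` for every admissible `u ∈ L²`. -/
theorem projection_variational_inequality
    {X : Type*} [MeasurableSpace X] (μ : Measure X) (ν : ℝ) (hν : 0 < ν)
    (r umin umax : X → ℝ)
    (hr_meas : Measurable r) (humin_meas : Measurable umin) (humax_meas : Measurable umax)
    (hr : MemLp r 2 μ) (humin : MemLp umin 2 μ) (humax : MemLp umax 2 μ)
    (hle : ∀ᵐ x ∂μ, umin x ≤ umax x) :
    Measurable (fun x => max (umin x) (min (umax x) (-r x / ν))) ∧
    MemLp (fun x => max (umin x) (min (umax x) (-r x / ν))) 2 μ ∧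
    (∀ᵐ x ∂μ, umin x ≤ max (umin x) (min (umax x) (-r x / ν)) ∧
      max (umin x) (min (umax x) (-r x / ν)) ≤ umax x) ∧
    ∀ u : X → ℝ, Measurable u → MemLp u 2 μ →
      (∀ᵐ x ∂μ, umin x ≤ u x ∧ u x ≤ umax x) →
      0 ≤ ∫ x, (r x + ν * max (umin x) (min (umax x) (-r x / ν)))
            * (u x - max (umin x) (min (umax x) (-r x / ν))) ∂μ := by
  have hs : MemLp (fun x => -r x / ν) 2 μ := by
    have := (hr.neg.const_mul (1/ν))
    convert this using 2 with x
    simp [Pi.neg_apply]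
    ring
  refine ⟨?_, ?_, ?_, ?_⟩
  · exact humin_meas.max (humax_meas.min ((hr_meas.neg).div_const ν))
  · exact humin.sup (humax.inf hs)
  · filter_upwards [hle] with x hx
    exact ⟨le_max_left _ _, max_le hx (min_le_left _ _)⟩
  · intro u hu_meas hu hadm
    apply integral_nonneg_of_ae
    filter_upwards [hle, hadm] with x hx ⟨h1, h2⟩
    simp only [Pi.zero_apply]
    set s := -r x / ν with hs
    have hrs : r x = -(ν * s) := by rw [hs]; field_simp [hν.ne']
    rcases le_total s (umin x) with h | h
    · have hmin : min (umax x) s = s := min_eq_right (h.trans hx)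
      have hmax : max (umin x) (min (umax x) s) = umin x := by rw [hmin]; exact max_eq_left h
      rw [hmax, hrs]
      nlinarith [mul_nonneg (mul_nonneg hν.le (sub_nonneg.2 h)) (sub_nonneg.2 h1)]
    · rcases le_total (umax x) s with h' | h'
      · have hmax : max (umin x) (min (umax x) s) = umax x := by
          rw [min_eq_left h']; exact max_eq_right hx
        rw [hmax, hrs]
        nlinarith [mul_nonneg (mul_nonneg hν.le (sub_nonneg.2 h')) (sub_nonneg.2 h2)]
      · have hmax : max (umin x) (min (umax x) s) = s := by
          rw [min_eq_right h']; exact max_eq_right h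
        rw [hmax, hrs]
        nlinarith
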